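/- Let N = 4m with m ≥ 1. Define f, g : ℤ/Nℤ → ℂ as the functions induced by the N-periodic functions f(x) = cos(πx/N) · ∏_{k=1}^{2m−1} sin(π(m+k−x)/N) and g(x) = sin(πx/N) · ∏_{k=1}^{2m−1} sin(π(m+k−x)/N) (both vanish outside the discrete interval [−m,m]). Then F_N f = √N · f and F_N g = −i√N · g. -/

import Mathlib

open Complex Finset

namespace S14

/-- complex exponential `exp(π i t / N)` for integer `t`. -/
noncomputable def E (N : ℕ) (t : ℤ) : ℂ := Complex.exp (Real.pi * Complex.I * t / N)

noncomputable def sR (N : ℕ) (t : ℤ) : ℝ := Real.sin (Real.pi * t / N)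

noncomputable def PR (m N : ℕ) (x : ℤ) : ℝ :=
  ∏ k ∈ Finset.range (2 * m - 1), sR N ((m : ℤ) + k + 1 - x)

variable {m N : ℕ}

lemma E_add (a b : ℤ) : E N (a + b) = E N a * E N b := by
  rw [E, E, E, ← Complex.exp_add]; congr 1; push_cast; ring

lemma E_zero : E N 0 = 1 := by simp [E]

lemma E_mul_self_neg (a : ℤ) : E N a * E N (-a) = 1 := by
  rw [← E_add]; simp [E_zero]

lemma E_N (hN : N ≠ 0) : E N N = -1 := by
  rw [E]
  have : (Real.pi : ℂ) * Complex.I * ((N : ℤ) : ℂ) / N = Real.pi * Complex.I := by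
    have hN' : (N : ℂ) ≠ 0 := Nat.cast_ne_zero.2 hN
    push_cast
    field_simp
  rw [this]
  exact Complex.exp_pi_mul_I

lemma E_int_two_N (t : ℤ) (hN : N ≠ 0) : E N (2 * N * t) = 1 := by
  rw [E]
  have : (Real.pi : ℂ) * Complex.I * ((2 * N * t : ℤ) : ℂ) / N = t * (2 * Real.pi * Complex.I) := by
    have hN' : (N : ℂ) ≠ 0 := Nat.cast_ne_zero.2 hN
    push_cast
    field_simp
  rw [this, Complex.exp_int_mul_two_pi_mul_I]

lemma two_I_sin (t : ℤ) : E N t - E N (-t) = 2 * Complex.I * (sR N t : ℝ) := by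
  have h1 : E N t = Complex.exp ((Real.pi * t / N : ℝ) * Complex.I) := by
    rw [E]; congr 1; push_cast; ring
  have h2 : E N (-t) = Complex.exp (-((Real.pi * t / N : ℝ) * Complex.I)) := by
    rw [E]; congr 1; push_cast; ring
  have h3 : (-((Real.pi * t / N : ℝ) * Complex.I)) = ((-(Real.pi * t / N) : ℝ) : ℂ) * Complex.I := by
    push_cast; ring
  rw [h1, h2, h3, Complex.exp_mul_I, Complex.exp_mul_I]
  rw [Complex.ofReal_neg, Complex.cos_neg, Complex.sin_neg]
  rw [sR, Complex.ofReal_sin]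
  ring


lemma sR_add_N (hN0 : N ≠ 0) (t : ℤ) : sR N (t + N) = - sR N t := by
  rw [sR, sR]
  have h : Real.pi * ((t : ℝ) + N) / N = Real.pi * t / N + Real.pi := by
    have : (N : ℝ) ≠ 0 := Nat.cast_ne_zero.2 hN0
    field_simp
  rw [show ((t + (N:ℤ) : ℤ) : ℝ) = (t : ℝ) + N by push_cast; ring, h, Real.sin_add_pi]

lemma sR_sub_N (hN0 : N ≠ 0) (t : ℤ) : sR N (t - N) = - sR N t := by
  have := sR_add_N (N := N) hN0 (t - N)
  simp at this
  linarith

lemma sR_reflect (hN0 : N ≠ 0) (t : ℤ) : sR N ((N : ℤ) - t) = sR N t := by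
  rw [sR, sR]
  have h : Real.pi * (((N:ℤ) - t : ℤ) : ℝ) / N = Real.pi - Real.pi * t / N := by
    have : (N : ℝ) ≠ 0 := Nat.cast_ne_zero.2 hN0
    push_cast
    field_simp
  rw [h, Real.sin_pi_sub]

lemma sR_pos (hN0 : N ≠ 0) {t : ℤ} (h1 : 0 < t) (h2 : t < N) : 0 < sR N t := by
  apply Real.sin_pos_of_pos_of_lt_pi
  · have : (0:ℝ) < t := by exact_mod_cast h1
    positivity
  · have hN' : (0:ℝ) < N := by exact_mod_cast Nat.pos_of_ne_zero hN0
    have ht : (t:ℝ) < N := by exact_mod_cast h2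
    rw [div_lt_iff₀ hN']
    exact mul_lt_mul_of_pos_left ht Real.pi_pos

lemma sR_neg (hN0 : N ≠ 0) {t : ℤ} (h1 : (N:ℤ) < t) (h2 : t < 2 * N) : sR N t < 0 := by
  have h := sR_sub_N (N := N) hN0 t
  have hp : 0 < sR N (t - N) := sR_pos hN0 (by omega) (by omega)
  linarith

lemma sR_N (hN0 : N ≠ 0) : sR N N = 0 := by
  have := sR_reflect (N := N) hN0 0
  rw [sR]
  have h : Real.pi * ((N:ℤ) : ℝ) / N = Real.pi := by
    have : (N : ℝ) ≠ 0 := Nat.cast_ne_zero.2 hN0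
    field_simp; norm_num
  rw [show (((N:ℕ) : ℤ) : ℝ) = ((N:ℕ) : ℝ) by push_cast; ring] at *
  rw [h, Real.sin_pi]

lemma PR_add_N (hm : 1 ≤ m) (hN0 : N ≠ 0) (x : ℤ) : PR m N (x + N) = - PR m N x := by
  rw [PR, PR]
  have hterm : ∀ k : ℕ, sR N ((m:ℤ)+k+1-(x+N)) = -1 * sR N ((m:ℤ)+k+1-x) := fun k => by
    rw [show (m:ℤ)+k+1-(x+N) = ((m:ℤ)+k+1-x) - N by ring, sR_sub_N hN0]; ring
  simp only [hterm]
  rw [Finset.prod_mul_distrib, Finset.prod_const, Finset.card_range]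
  have : (-1:ℝ)^(2*m-1) = -1 := Odd.neg_one_pow ⟨m-1, by omega⟩
  rw [this]; ring

lemma PR_sub_N (hm : 1 ≤ m) (hN0 : N ≠ 0) (x : ℤ) : PR m N (x - N) = - PR m N x := by
  have := PR_add_N (m := m) hm hN0 (x - N)
  simp at this
  linarith

lemma PR_even (hm : 1 ≤ m) (hN : N = 4 * m) (x : ℤ) : PR m N (-x) = PR m N x := by
  have hN0 : N ≠ 0 := by omega
  rw [PR, PR, ← Finset.prod_range_reflect]
  apply Finset.prod_congr rfl
  intro k hk
  have hk' : k < 2*m-1 := Finset.mem_range.1 hk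
  have harg : (m:ℤ) + ((2*m-1-1-k : ℕ) : ℤ) + 1 - -x = (N:ℤ) - ((m:ℤ) + k + 1 - x) := by omega
  rw [harg, sR_reflect hN0]

lemma star_real (hm : 1 ≤ m) (hN : N = 4 * m) (j : ℤ) :
    sR N ((m:ℤ) + j) * PR m N j = sR N ((m:ℤ) + 1 - j) * PR m N (j - 1) := by
  have hN0 : N ≠ 0 := by omega
  have hL : sR N ((m:ℤ) + j) * PR m N j = ∏ k ∈ Finset.range (2*m), sR N ((m:ℤ)+k+1-j) := by
    rw [show 2*m = (2*m-1)+1 by omega, Finset.prod_range_succ, PR]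
    have harg : (m:ℤ) + ((2*m-1 : ℕ) : ℤ) + 1 - j = (N:ℤ) - ((m:ℤ) + j) := by omega
    rw [harg, sR_reflect hN0]
    ring
  have hR : sR N ((m:ℤ) + 1 - j) * PR m N (j - 1) = ∏ k ∈ Finset.range (2*m), sR N ((m:ℤ)+k+1-j) := by
    rw [show 2*m = (2*m-1)+1 by omega, Finset.prod_range_succ', PR]
    have h1 : ∀ k ∈ Finset.range (2*m-1),
        sR N ((m:ℤ)+k+1-(j-1)) = sR N ((m:ℤ)+((k+1 : ℕ) : ℤ)+1-j) := by
      intro k _; congr 1; push_cast; ring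
    rw [Finset.prod_congr rfl h1]
    have h0 : sR N ((m:ℤ) + ((0:ℕ):ℤ) + 1 - j) = sR N ((m:ℤ) + 1 - j) := by norm_num
    rw [h0]; ring
  rw [hL, hR]

noncomputable def hC (m N : ℕ) (x : ℤ) : ℂ := E N x * ((PR m N x : ℝ) : ℂ)

noncomputable def AH (m N : ℕ) (y : ℤ) : ℂ :=
  ∑ j ∈ Finset.range N, E N (-2 * j * y) * hC m N j

noncomputable def BR (m N : ℕ) (y : ℤ) : ℝ := sR N ((m:ℤ) + y) * PR m N y

lemma sum_shift {M : Type*} [AddCommGroup M] (N : ℕ) (F : ℤ → M)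
    (hF : ∀ x, F (x + N) = F x) :
    ∑ j ∈ Finset.range N, F ((j:ℤ) + 1) = ∑ j ∈ Finset.range N, F j := by
  have h1 : ∑ j ∈ Finset.range (N+1), F j = (∑ j ∈ Finset.range N, F ((j:ℤ)+1)) + F 0 := by
    rw [Finset.sum_range_succ']
    congr 1
  have h2 : ∑ j ∈ Finset.range (N+1), F j = (∑ j ∈ Finset.range N, F j) + F N :=
    Finset.sum_range_succ _ _
  have h3 : F ((N:ℕ):ℤ) = F 0 := by
    have := hF 0; rw [zero_add] at this; exact this
  rw [h3] at h2
  exact add_right_cancel (h1.symm.trans h2)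

lemma sum_reflect {M : Type*} [AddCommGroup M] (N : ℕ) (F : ℤ → M)
    (hF : ∀ x, F (x + N) = F x) :
    ∑ j ∈ Finset.range N, F (-(j:ℤ)) = ∑ j ∈ Finset.range N, F j := by
  have h1 : ∑ j ∈ Finset.range N, F (-(j:ℤ))
      = ∑ j ∈ Finset.range N, (fun k : ℕ => F ((k:ℤ) + 1 - N)) (N - 1 - j) := by
    apply Finset.sum_congr rfl
    intro j hj
    have hj' : j < N := Finset.mem_range.1 hj
    simp only []
    congr 1
    omega
  rw [h1]
  rw [Finset.sum_range_reflect (fun k : ℕ => F ((k:ℤ) + 1 - N)) N]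
  have h2 : ∀ j : ℕ, F ((j:ℤ) + 1 - N) = F ((j:ℤ) + 1) := by
    intro j
    have := hF ((j:ℤ) + 1 - N)
    rw [show (j:ℤ) + 1 - N + N = (j:ℤ) + 1 by ring] at this
    exact this.symm
  simp only [h2]
  exact sum_shift N F hF

lemma hC_add_N (hm : 1 ≤ m) (hN0 : N ≠ 0) (x : ℤ) : hC m N (x + N) = hC m N x := by
  rw [hC, hC, E_add, E_N hN0, PR_add_N hm hN0]
  push_cast; ring

lemma AH_add_N (hN0 : N ≠ 0) (y : ℤ) : AH m N (y + N) = AH m N y := by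
  apply Finset.sum_congr rfl
  intro j _
  have h : (-2:ℤ)*j*(y+N) = (-2*j*y) + 2*N*(-j) := by ring
  rw [h, E_add, E_int_two_N _ hN0, mul_one]

lemma E_two_m (hN : N = 4 * m) (hm : 1 ≤ m) : E N (2*(m:ℤ)) = Complex.I := by
  rw [E]
  have hm' : (m : ℂ) ≠ 0 := Nat.cast_ne_zero.2 (by omega)
  have : (Real.pi : ℂ) * Complex.I * ((2*(m:ℤ) : ℤ) : ℂ) / N = Real.pi / 2 * Complex.I := by
    rw [hN]; push_cast; field_simp; ring
  rw [this, Complex.exp_mul_I, Complex.cos_pi_div_two, Complex.sin_pi_div_two]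
  ring

lemma E_neg_two_m (hN : N = 4 * m) (hm : 1 ≤ m) : E N (-(2*(m:ℤ))) = -Complex.I := by
  have h := E_mul_self_neg (N := N) (2*(m:ℤ))
  rw [E_two_m hN hm] at h
  have : Complex.I * (E N (-(2*(m:ℤ))) - -Complex.I) = 0 := by
    rw [mul_sub, h]; simp [Complex.I_mul_I]
  rcases mul_eq_zero.1 this with h' | h'
  · exact absurd h' Complex.I_ne_zero
  · linear_combination h'

lemma starL (hm : 1 ≤ m) (hN : N = 4 * m) (j : ℤ) :
    (E N ((m:ℤ) - 2*j) - E N (3*(m:ℤ))) * E N j = 2 * ((sR N ((m:ℤ)+j) : ℝ) : ℂ) := by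
  have e1 : E N ((m:ℤ) - 2*j) * E N j = E N (2*(m:ℤ)) * E N (-((m:ℤ)+j)) := by
    rw [← E_add, ← E_add]; congr 1; ring
  have e2 : E N (3*(m:ℤ)) * E N j = E N (2*(m:ℤ)) * E N ((m:ℤ)+j) := by
    rw [← E_add, ← E_add]; congr 1; ring
  have e3 := two_I_sin (N := N) ((m:ℤ)+j)
  rw [sub_mul, e1, e2, E_two_m hN hm]
  have : E N (-((m:ℤ)+j)) - E N ((m:ℤ)+j) = -(2 * Complex.I * ((sR N ((m:ℤ)+j) : ℝ) : ℂ)) := by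
    rw [← e3]; ring
  calc Complex.I * E N (-((m:ℤ) + j)) - Complex.I * E N ((m:ℤ) + j)
      = Complex.I * (E N (-((m:ℤ)+j)) - E N ((m:ℤ)+j)) := by ring
    _ = Complex.I * (-(2 * Complex.I * ((sR N ((m:ℤ)+j) : ℝ) : ℂ))) := by rw [this]
    _ = 2 * ((sR N ((m:ℤ)+j) : ℝ) : ℂ) := by
          rw [show Complex.I * (-(2 * Complex.I * ((sR N ((m:ℤ)+j) : ℝ) : ℂ)))
              = -(Complex.I*Complex.I) * 2 * ((sR N ((m:ℤ)+j) : ℝ) : ℂ) by ring,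
            Complex.I_mul_I]
          ring

lemma starR (hm : 1 ≤ m) (hN : N = 4 * m) (j : ℤ) :
    (E N (-(m:ℤ) - 2*(j-1)) - E N (-(3*(m:ℤ)))) * E N (j-1) = 2 * ((sR N ((m:ℤ)+1-j) : ℝ) : ℂ) := by
  have e1 : E N (-(m:ℤ) - 2*(j-1)) * E N (j-1) = E N (-(2*(m:ℤ))) * E N ((m:ℤ)+1-j) := by
    rw [← E_add, ← E_add]; congr 1; ring
  have e2 : E N (-(3*(m:ℤ))) * E N (j-1) = E N (-(2*(m:ℤ))) * E N (-((m:ℤ)+1-j)) := by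
    rw [← E_add, ← E_add]; congr 1; ring
  have e3 := two_I_sin (N := N) ((m:ℤ)+1-j)
  rw [sub_mul, e1, e2, E_neg_two_m hN hm]
  calc -Complex.I * E N ((m:ℤ)+1-j) - -Complex.I * E N (-((m:ℤ)+1-j))
      = -Complex.I * (E N ((m:ℤ)+1-j) - E N (-((m:ℤ)+1-j))) := by ring
    _ = -Complex.I * (2 * Complex.I * ((sR N ((m:ℤ)+1-j) : ℝ) : ℂ)) := by rw [e3]
    _ = 2 * ((sR N ((m:ℤ)+1-j) : ℝ) : ℂ) := by
          rw [show -Complex.I * (2 * Complex.I * ((sR N ((m:ℤ)+1-j) : ℝ) : ℂ))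
              = -(Complex.I*Complex.I) * 2 * ((sR N ((m:ℤ)+1-j) : ℝ) : ℂ) by ring,
            Complex.I_mul_I]
          ring

lemma star_C (hm : 1 ≤ m) (hN : N = 4 * m) (j : ℤ) :
    (E N ((m:ℤ) - 2*j) - E N (3*(m:ℤ))) * hC m N j
      = (E N (-(m:ℤ) - 2*(j-1)) - E N (-(3*(m:ℤ)))) * hC m N (j-1) := by
  rw [hC, hC, ← mul_assoc, ← mul_assoc, starL hm hN j, starR hm hN j]
  have := star_real hm hN j
  push_cast
  rw [mul_assoc, mul_assoc]
  congr 1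
  exact_mod_cast congrArg (fun r : ℝ => ((r : ℝ) : ℂ)) this

lemma BR_rec (hm : 1 ≤ m) (hN : N = 4 * m) (y : ℤ) :
    BR m N (y+1) * sR N ((m:ℤ)+y) = BR m N y * sR N (3*(m:ℤ)+y) := by
  have hN0 : N ≠ 0 := by omega
  have h1 := star_real hm hN (-y)
  rw [show -y - 1 = -(y+1) by ring, PR_even hm hN (y+1), PR_even hm hN y,
    show (m:ℤ) + -y = (m:ℤ) - y by ring, show (m:ℤ) + 1 - -y = (m:ℤ) + (y+1) by ring] at h1
  have h2 : sR N (3*(m:ℤ)+y) = sR N ((m:ℤ) - y) := by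
    rw [show 3*(m:ℤ)+y = (N:ℤ) - ((m:ℤ) - y) by omega, sR_reflect hN0]
  rw [BR, BR, h2]
  linear_combination (-(sR N ((m:ℤ)+y))) * h1

lemma AH_rec (hm : 1 ≤ m) (hN : N = 4 * m) (y : ℤ) :
    AH m N (y+1) * ((sR N ((m:ℤ)+y) : ℝ) : ℂ) = AH m N y * ((sR N (3*(m:ℤ)+y) : ℝ) : ℂ) := by
  have hN0 : N ≠ 0 := by omega
  set u : ℤ → ℂ := fun j => (E N ((m:ℤ) - 2*j) - E N (3*(m:ℤ))) * hC m N j with hu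
  set v : ℤ → ℂ := fun j => (E N (-(m:ℤ) - 2*j) - E N (-(3*(m:ℤ)))) * hC m N j with hv
  -- per-term identity
  have pt : ∀ j : ℤ,
      2*Complex.I*((sR N ((m:ℤ)+y):ℝ):ℂ) * (E N (-2*j*(y+1)) * hC m N j)
        - 2*Complex.I*((sR N (3*(m:ℤ)+y):ℝ):ℂ) * (E N (-2*j*y) * hC m N j)
      = E N y * (E N (-2*j*y) * u j) - E N (-y) * (E N (-2*j*y) * v j) := by
    intro j
    have h1 : E N ((m:ℤ)+y) = E N (m:ℤ) * E N y := by rw [← E_add]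
    have h2 : E N (-((m:ℤ)+y)) = E N (-(m:ℤ)) * E N (-y) := by rw [← E_add]; congr 1; ring
    have h3 : E N (3*(m:ℤ)+y) = E N (3*(m:ℤ)) * E N y := by rw [← E_add]
    have h4 : E N (-(3*(m:ℤ)+y)) = E N (-(3*(m:ℤ))) * E N (-y) := by rw [← E_add]; congr 1; ring
    have h5 : E N (-2*j*(y+1)) = E N (-2*j*y) * E N (-2*j) := by rw [← E_add]; congr 1; ring
    have h6 : E N ((m:ℤ)-2*j) = E N (m:ℤ) * E N (-2*j) := by rw [← E_add]; congr 1; ring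
    have h7 : E N (-(m:ℤ)-2*j) = E N (-(m:ℤ)) * E N (-2*j) := by rw [← E_add]; congr 1; ring
    rw [← two_I_sin, ← two_I_sin, hu, hv]
    simp only []
    rw [h1, h2, h3, h4, h5, h6, h7]
    ring
  have hsum : ∑ j ∈ Finset.range N,
        (2*Complex.I*((sR N ((m:ℤ)+y):ℝ):ℂ) * (E N (-2*(j:ℤ)*(y+1)) * hC m N j)
          - 2*Complex.I*((sR N (3*(m:ℤ)+y):ℝ):ℂ) * (E N (-2*(j:ℤ)*y) * hC m N j))
      = ∑ j ∈ Finset.range N,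
        (E N y * (E N (-2*(j:ℤ)*y) * u j) - E N (-y) * (E N (-2*(j:ℤ)*y) * v j)) :=
    Finset.sum_congr rfl (fun j _ => pt j)
  rw [Finset.sum_sub_distrib, Finset.sum_sub_distrib, ← Finset.mul_sum, ← Finset.mul_sum,
    ← Finset.mul_sum, ← Finset.mul_sum] at hsum
  -- hsum : 2I s1 * AH(y+1) - 2I s2 * AH y = E y * S1 - E (-y) * S2
  set S2 : ℂ := ∑ j ∈ Finset.range N, E N (-2*(j:ℤ)*y) * v j with hS2
  -- v is N-periodic
  have hvper : ∀ x, v (x + N) = v x := by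
    intro x
    simp only [hv]
    rw [show -(m:ℤ) - 2*(x + N) = (-(m:ℤ) - 2*x) + 2*N*(-1) by ring, E_add,
      E_int_two_N _ hN0, mul_one, hC_add_N hm hN0]
  -- shift: S1 = E(-2y) * S2
  have hshift : ∑ j ∈ Finset.range N, E N (-2*(j:ℤ)*y) * u j = E N (-2*y) * S2 := by
    have hGstep : ∀ j : ℤ, E N (-2*j*y) * u j = E N (-2*((j-1)+1)*y) * v (j-1) := by
      intro j
      rw [hu, hv]
      simp only []
      rw [star_C hm hN j]
      congr 2
      ring
    have hFper : ∀ x : ℤ, E N (-2*(((x+N)-1)+1)*y) * v ((x+N)-1) = E N (-2*((x-1)+1)*y) * v (x-1) := by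
      intro x
      rw [show ((x+(N:ℤ))-1) = (x-1) + N by ring, hvper]
      rw [show -2*(((x-1)+(N:ℤ))+1)*y = (-2*((x-1)+1)*y) + 2*N*(-y) by ring, E_add,
        E_int_two_N _ hN0, mul_one]
    have hs := sum_shift N (fun x => E N (-2*((x-1)+1)*y) * v (x-1)) hFper
    calc ∑ j ∈ Finset.range N, E N (-2*(j:ℤ)*y) * u j
        = ∑ j ∈ Finset.range N, E N (-2*(((j:ℤ)-1)+1)*y) * v ((j:ℤ)-1) :=
          Finset.sum_congr rfl (fun j _ => hGstep j)
      _ = ∑ j ∈ Finset.range N, E N (-2*((((j:ℤ)+1)-1)+1)*y) * v (((j:ℤ)+1)-1) := hs.symm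
      _ = ∑ j ∈ Finset.range N, E N (-2*y) * (E N (-2*(j:ℤ)*y) * v (j:ℤ)) := by
          apply Finset.sum_congr rfl
          intro j _
          rw [show ((j:ℤ)+1)-1 = (j:ℤ) by ring]
          rw [show -2*((j:ℤ)+1)*y = (-2*(j:ℤ)*y) + (-2*y) by ring, E_add]
          ring
      _ = E N (-2*y) * S2 := by rw [hS2, Finset.mul_sum]
  rw [hshift] at hsum
  have hEE : E N y * (E N (-2*y) * S2) - E N (-y) * S2 = 0 := by
    rw [show E N y * (E N (-2*y) * S2) = (E N y * E N (-2*y)) * S2 by ring, ← E_add,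
      show y + -2*y = -y by ring]
    ring
  rw [hEE] at hsum
  have h2I : (2*Complex.I : ℂ) ≠ 0 := by
    simp [Complex.I_ne_zero]
  have hz : 2*Complex.I * ((∑ j ∈ Finset.range N, E N (-2*(j:ℤ)*(y+1)) * hC m N j)
        * ((sR N ((m:ℤ)+y):ℝ):ℂ)
      - (∑ j ∈ Finset.range N, E N (-2*(j:ℤ)*y) * hC m N j)
        * ((sR N (3*(m:ℤ)+y):ℝ):ℂ)) = 0 := by
    rw [mul_sub]; linear_combination hsum
  have hXY := sub_eq_zero.1 ((mul_eq_zero.1 hz).resolve_left h2I)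
  exact hXY

lemma sR_zero : sR N 0 = 0 := by simp [sR]

lemma PR_pos (hm : 1 ≤ m) (hN : N = 4 * m) {x : ℤ} (h1 : 0 ≤ x) (h2 : x ≤ m) :
    0 < PR m N x := by
  have hN0 : N ≠ 0 := by omega
  apply Finset.prod_pos
  intro k hk
  have hk' : k < 2*m-1 := Finset.mem_range.1 hk
  exact sR_pos hN0 (by omega) (by omega)

lemma PR_zero_mid (hm : 1 ≤ m) {x : ℤ} (h1 : (m:ℤ)+1 ≤ x) (h2 : x ≤ 3*(m:ℤ)-1) :
    PR m N x = 0 := by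
  apply Finset.prod_eq_zero (i := (x - (m:ℤ) - 1).toNat)
  · exact Finset.mem_range.2 (by omega)
  · rw [show (m:ℤ) + ((x - (m:ℤ) - 1).toNat : ℤ) + 1 - x = 0 by omega, sR_zero]

lemma BR_zero_mid (hm : 1 ≤ m) (hN : N = 4 * m) {y : ℤ} (h1 : (m:ℤ)+1 ≤ y) (h2 : y ≤ 3*(m:ℤ)) :
    BR m N y = 0 := by
  have hN0 : N ≠ 0 := by omega
  rcases eq_or_lt_of_le h2 with h | h
  · rw [BR, show (m:ℤ) + y = ((N:ℕ):ℤ) by omega, sR_N hN0, zero_mul]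
  · rw [BR, PR_zero_mid hm h1 (by omega), mul_zero]

lemma BR0_pos (hm : 1 ≤ m) (hN : N = 4 * m) : 0 < BR m N 0 := by
  have hN0 : N ≠ 0 := by omega
  rw [BR]
  exact mul_pos (sR_pos hN0 (by omega) (by omega)) (PR_pos hm hN le_rfl (by omega))

lemma BR_add_N (hm : 1 ≤ m) (hN0 : N ≠ 0) (y : ℤ) : BR m N (y + N) = BR m N y := by
  rw [BR, BR, show (m:ℤ)+(y+N) = ((m:ℤ)+y)+N by ring, sR_add_N hN0, PR_add_N hm hN0]
  ring

lemma periodic_int {M : Type*} (F : ℤ → M) (N : ℕ) (hF : ∀ x, F (x + N) = F x) (y t : ℤ) :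
    F (y + N * t) = F y := by
  induction t using Int.induction_on with
  | zero => simp
  | succ k ih => rw [show y + (N:ℤ)*((k:ℤ)+1) = (y + N*k) + N by ring, hF, ih]
  | pred k ih =>
      have h := hF (y + (N:ℤ)*(-(k:ℤ)-1))
      rw [show y + (N:ℤ)*(-(k:ℤ)-1) + N = y + N*(-(k:ℤ)) by ring] at h
      rw [← h]
      exact ih

lemma AH_eq_all (hm : 1 ≤ m) (hN : N = 4 * m) (y : ℤ) :
    AH m N y = (AH m N 0 / ((BR m N 0 : ℝ) : ℂ)) * ((BR m N y : ℝ) : ℂ) := by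
  have hN0 : N ≠ 0 := by omega
  set μ := AH m N 0 / ((BR m N 0 : ℝ) : ℂ) with hμ
  have hB0 : BR m N 0 ≠ 0 := ne_of_gt (BR0_pos hm hN)
  have hB0C : ((BR m N 0 : ℝ) : ℂ) ≠ 0 := Complex.ofReal_ne_zero.mpr hB0
  have phase1 : ∀ n : ℕ, n ≤ m → AH m N (n:ℤ) = μ * ((BR m N (n:ℤ) : ℝ) : ℂ) := by
    intro n
    induction n with
    | zero =>
        intro _
        simp only [Nat.cast_zero]
        rw [hμ, div_mul_cancel₀ _ hB0C]
    | succ n ih =>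
        intro hn
        have ihn := ih (by omega)
        have hA := AH_rec hm hN (n:ℤ)
        have hB := BR_rec hm hN (n:ℤ)
        have hsneC : ((sR N ((m:ℤ)+n) : ℝ) : ℂ) ≠ 0 :=
          Complex.ofReal_ne_zero.mpr (ne_of_gt (sR_pos hN0 (by omega) (by omega)))
        have hBC : ((BR m N ((n:ℤ)+1) : ℝ) : ℂ) * ((sR N ((m:ℤ)+n) : ℝ) : ℂ)
            = ((BR m N (n:ℤ) : ℝ) : ℂ) * ((sR N (3*(m:ℤ)+n) : ℝ) : ℂ) := by
          exact_mod_cast congrArg (fun r : ℝ => (r : ℂ)) hB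
        have key : AH m N ((n:ℤ)+1) = μ * ((BR m N ((n:ℤ)+1) : ℝ) : ℂ) := by
          apply mul_right_cancel₀ hsneC
          rw [hA, ihn]
          linear_combination (-μ) * hBC
        rw [show ((n+1:ℕ):ℤ) = (n:ℤ)+1 by push_cast; ring]
        exact key
  have phase2 : ∀ d : ℕ, d ≤ 2*m - 1 → AH m N ((m:ℤ)+1+d) = 0 := by
    intro d
    induction d with
    | zero =>
        intro _
        have hA := AH_rec hm hN (m:ℤ)
        rw [show 3*(m:ℤ)+m = ((N:ℕ):ℤ) by omega, sR_N hN0] at hA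
        simp only [Complex.ofReal_zero, mul_zero] at hA
        have hs : ((sR N ((m:ℤ)+m) : ℝ) : ℂ) ≠ 0 :=
          Complex.ofReal_ne_zero.mpr (ne_of_gt (sR_pos hN0 (by omega) (by omega)))
        have := (mul_eq_zero.1 hA).resolve_right hs
        simpa using this
    | succ d ihd =>
        intro hd
        have hprev := ihd (by omega)
        have hA := AH_rec hm hN ((m:ℤ)+1+d)
        rw [hprev, zero_mul] at hA
        have hs : ((sR N ((m:ℤ)+((m:ℤ)+1+d)) : ℝ) : ℂ) ≠ 0 :=
          Complex.ofReal_ne_zero.mpr (ne_of_gt (sR_pos hN0 (by omega) (by omega)))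
        have hz := (mul_eq_zero.1 hA).resolve_right hs
        rw [show (m:ℤ)+1+((d+1:ℕ):ℤ) = (m:ℤ)+1+(d:ℤ)+1 by push_cast; ring]
        exact hz
  have phase3 : ∀ d : ℕ, d ≤ m - 1 →
      AH m N ((4*(m:ℤ)) - d) = μ * ((BR m N ((4*(m:ℤ)) - d) : ℝ) : ℂ) := by
    intro d
    induction d with
    | zero =>
        intro _
        have hA4 : AH m N (4*(m:ℤ)) = AH m N 0 := by
          have h := AH_add_N (m := m) hN0 0
          rw [zero_add] at h
          rw [show 4*(m:ℤ) = ((N:ℕ):ℤ) by omega]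
          exact h
        have hB4 : BR m N (4*(m:ℤ)) = BR m N 0 := by
          have h := BR_add_N hm hN0 0
          rw [zero_add] at h
          rw [show 4*(m:ℤ) = ((N:ℕ):ℤ) by omega]
          exact h
        simp only [Nat.cast_zero, sub_zero]
        rw [hA4, hB4, hμ, div_mul_cancel₀ _ hB0C]
    | succ d ihd =>
        intro hd
        have ih := ihd (by omega)
        have hA := AH_rec hm hN (4*(m:ℤ) - d - 1)
        have hB := BR_rec hm hN (4*(m:ℤ) - d - 1)
        rw [show 4*(m:ℤ) - d - 1 + 1 = 4*(m:ℤ) - d by ring] at hA hB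
        have hs2 : ((sR N (3*(m:ℤ) + (4*(m:ℤ) - d - 1)) : ℝ) : ℂ) ≠ 0 :=
          Complex.ofReal_ne_zero.mpr (sR_neg hN0 (by omega) (by omega)).ne
        have hBC : ((BR m N (4*(m:ℤ) - d) : ℝ) : ℂ) * ((sR N ((m:ℤ) + (4*(m:ℤ) - d - 1)) : ℝ) : ℂ)
            = ((BR m N (4*(m:ℤ) - d - 1) : ℝ) : ℂ) * ((sR N (3*(m:ℤ) + (4*(m:ℤ) - d - 1)) : ℝ) : ℂ) := by
          exact_mod_cast congrArg (fun r : ℝ => (r : ℂ)) hB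
        have key : AH m N (4*(m:ℤ) - d - 1) = μ * ((BR m N (4*(m:ℤ) - d - 1) : ℝ) : ℂ) := by
          apply mul_right_cancel₀ hs2
          rw [← hA, ih]
          linear_combination μ * hBC
        rw [show 4*(m:ℤ) - ((d+1:ℕ):ℤ) = 4*(m:ℤ) - (d:ℤ) - 1 by push_cast; ring]
        exact key
  have main : ∀ n : ℕ, n ≤ 4*m → AH m N (n:ℤ) = μ * ((BR m N (n:ℤ) : ℝ) : ℂ) := by
    intro n hn
    rcases le_or_gt n m with h1 | h1
    · exact phase1 n h1
    rcases le_or_gt n (3*m) with h2 | h2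
    · have hz := phase2 (n - m - 1) (by omega)
      rw [show (m:ℤ)+1+((n-m-1:ℕ):ℤ) = (n:ℤ) by omega] at hz
      rw [hz, BR_zero_mid hm hN (by omega) (by omega)]
      simp
    · have h3 := phase3 (4*m - n) (by omega)
      rw [show 4*(m:ℤ) - ((4*m-n:ℕ):ℤ) = (n:ℤ) by omega] at h3
      exact h3
  -- extend to all of ℤ
  have hAper : ∀ x : ℤ, AH m N (x + N) = AH m N x := AH_add_N hN0
  have hBper : ∀ x : ℤ, BR m N (x + N) = BR m N x := BR_add_N hm hN0
  have hy : y = ((y % (N:ℤ)).toNat : ℤ) + (N:ℤ) * (y / (N:ℤ)) := by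
    have h0 : (0:ℤ) ≤ y % N := Int.emod_nonneg y (by exact_mod_cast hN0)
    have := Int.emod_add_mul_ediv y (N:ℤ)
    omega
  have hlt : (y % (N:ℤ)).toNat ≤ 4*m := by
    have h0 : (0:ℤ) ≤ y % N := Int.emod_nonneg y (by exact_mod_cast hN0)
    have h1 : y % (N:ℤ) < N := Int.emod_lt_of_pos y (by positivity)
    omega
  rw [hy, periodic_int _ N hAper _ _, periodic_int _ N hBper _ _]
  exact main _ hlt

lemma E_pow (a : ℤ) : ∀ y : ℕ, E N (2*a*y) = (E N (2*a))^y := by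
  intro y
  induction y with
  | zero => simp [E_zero]
  | succ y ih =>
      rw [show 2*a*((y+1:ℕ):ℤ) = 2*a*y + 2*a by push_cast; ring, E_add, ih, pow_succ]

lemma orth (hN0 : N ≠ 0) (a : ℤ) :
    ∑ y ∈ Finset.range N, E N (2*a*(y:ℤ)) = if ((N:ℤ) ∣ a) then (N:ℂ) else 0 := by
  by_cases hdvd : (N:ℤ) ∣ a
  · rw [if_pos hdvd]
    obtain ⟨c, hc⟩ := hdvd
    have : ∀ y : ℕ, E N (2*a*(y:ℤ)) = 1 := by
      intro y
      rw [hc, show 2*((N:ℤ)*c)*(y:ℤ) = 2*N*(c*y) by ring, E_int_two_N _ hN0]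
    rw [Finset.sum_congr rfl (fun y _ => this y)]
    simp
  · rw [if_neg hdvd]
    have hne : E N (2*a) ≠ 1 := by
      intro h1
      rw [E] at h1
      obtain ⟨k, hk⟩ := Complex.exp_eq_one_iff.1 h1
      apply hdvd
      refine ⟨k, ?_⟩
      have hNC : (N:ℂ) ≠ 0 := Nat.cast_ne_zero.2 hN0
      have hpi : (Real.pi : ℂ) ≠ 0 := Complex.ofReal_ne_zero.mpr Real.pi_ne_zero
      have hI : Complex.I ≠ 0 := Complex.I_ne_zero
      have h2piI : (2*(Real.pi:ℂ)*Complex.I) ≠ 0 := by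
        exact mul_ne_zero (mul_ne_zero two_ne_zero hpi) hI
      have hk' : (2*(Real.pi:ℂ)*Complex.I) * (a:ℂ) = (2*(Real.pi:ℂ)*Complex.I) * ((N:ℂ)*(k:ℂ)) := by
        field_simp at hk
        push_cast at hk
        linear_combination ((Real.pi:ℂ)*Complex.I) * hk
      have : (a : ℂ) = (N:ℂ) * (k:ℂ) := mul_left_cancel₀ h2piI hk'
      exact_mod_cast this
    have hpow : (E N (2*a))^N = 1 := by
      rw [← E_pow, show 2*a*((N:ℕ):ℤ) = 2*N*a by ring, E_int_two_N _ hN0]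
    calc ∑ y ∈ Finset.range N, E N (2*a*(y:ℤ)) = ∑ y ∈ Finset.range N, (E N (2*a))^y :=
          Finset.sum_congr rfl (fun y _ => E_pow a y)
      _ = ((E N (2*a))^N - 1) / (E N (2*a) - 1) := geom_sum_eq hne N
      _ = 0 := by rw [hpow]; simp

lemma conj_E (t : ℤ) : (starRingEnd ℂ) (E N t) = E N (-t) := by
  rw [E, E, ← Complex.exp_conj]
  congr 1
  simp only [map_div₀, map_mul, Complex.conj_I, Complex.conj_ofReal, map_intCast, map_natCast]
  push_cast
  ring

lemma hC_mul_conj (j : ℤ) : hC m N j * (starRingEnd ℂ) (hC m N j) = (((PR m N j)^2 : ℝ) : ℂ) := by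
  rw [hC, map_mul, conj_E, Complex.conj_ofReal]
  rw [show E N j * ((PR m N j : ℝ):ℂ) * (E N (-j) * ((PR m N j : ℝ):ℂ))
    = (E N j * E N (-j)) * (((PR m N j:ℝ):ℂ) * ((PR m N j:ℝ):ℂ)) by ring, E_mul_self_neg]
  push_cast
  ring

lemma parseval (hm : 1 ≤ m) (hN : N = 4 * m) :
    ∑ y ∈ Finset.range N, AH m N y * (starRingEnd ℂ) (AH m N y)
      = (N:ℂ) * ∑ j ∈ Finset.range N, (((PR m N j)^2 : ℝ) : ℂ) := by
  have hN0 : N ≠ 0 := by omega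
  have expand : ∀ y : ℕ, AH m N y * (starRingEnd ℂ) (AH m N y)
      = ∑ j ∈ Finset.range N, ∑ k ∈ Finset.range N,
          E N (2*((k:ℤ)-(j:ℤ))*(y:ℤ)) * (hC m N j * (starRingEnd ℂ) (hC m N k)) := by
    intro y
    rw [AH, map_sum, Finset.sum_mul_sum]
    apply Finset.sum_congr rfl
    intro j _
    apply Finset.sum_congr rfl
    intro k _
    rw [map_mul, conj_E]
    rw [show 2*((k:ℤ)-(j:ℤ))*(y:ℤ) = (-2*(j:ℤ)*(y:ℤ)) + (-(-2*(k:ℤ)*(y:ℤ))) by ring, E_add]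
    ring
  calc ∑ y ∈ Finset.range N, AH m N y * (starRingEnd ℂ) (AH m N y)
      = ∑ y ∈ Finset.range N, ∑ j ∈ Finset.range N, ∑ k ∈ Finset.range N,
          E N (2*((k:ℤ)-(j:ℤ))*(y:ℤ)) * (hC m N j * (starRingEnd ℂ) (hC m N k)) :=
        Finset.sum_congr rfl (fun y _ => expand y)
    _ = ∑ j ∈ Finset.range N, ∑ k ∈ Finset.range N, ∑ y ∈ Finset.range N,
          E N (2*((k:ℤ)-(j:ℤ))*(y:ℤ)) * (hC m N j * (starRingEnd ℂ) (hC m N k)) := by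
        rw [Finset.sum_comm]
        apply Finset.sum_congr rfl
        intro j _
        rw [Finset.sum_comm]
    _ = ∑ j ∈ Finset.range N, ∑ k ∈ Finset.range N,
          (∑ y ∈ Finset.range N, E N (2*((k:ℤ)-(j:ℤ))*(y:ℤ))) * (hC m N j * (starRingEnd ℂ) (hC m N k)) := by
        apply Finset.sum_congr rfl; intro j _
        apply Finset.sum_congr rfl; intro k _
        rw [← Finset.sum_mul]
    _ = ∑ j ∈ Finset.range N, (N:ℂ) * (hC m N j * (starRingEnd ℂ) (hC m N j)) := by
        apply Finset.sum_congr rfl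
        intro j hj
        rw [Finset.sum_eq_single j]
        · rw [orth hN0, if_pos (by simp)]
        · intro k hk hkj
          rw [orth hN0, if_neg, zero_mul]
          intro hdvd
          have hj' : j < N := Finset.mem_range.1 hj
          have hk' : k < N := Finset.mem_range.1 hk
          have habs : (N:ℤ) ∣ |(k:ℤ) - j| := (dvd_abs _ _).2 hdvd
          have hpos : 0 < |(k:ℤ) - j| := abs_pos.2 (by
            intro h0
            apply hkj
            omega)
          have hle := Int.le_of_dvd hpos habs
          rcases abs_cases ((k:ℤ) - j) with ⟨he, _⟩ | ⟨he, _⟩ <;> omega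
        · intro hj'
          exact absurd hj hj'
    _ = (N:ℂ) * ∑ j ∈ Finset.range N, (((PR m N j)^2 : ℝ) : ℂ) := by
        rw [Finset.mul_sum]
        apply Finset.sum_congr rfl
        intro j _
        rw [hC_mul_conj]

lemma sum_B_sq (hm : 1 ≤ m) (hN : N = 4 * m) :
    2 * ∑ y ∈ Finset.range N, (BR m N y)^2 = ∑ y ∈ Finset.range N, (PR m N y)^2 := by
  have hN0 : N ≠ 0 := by omega
  have hper : ∀ x : ℤ, (BR m N (x + N))^2 = (BR m N x)^2 := by
    intro x; rw [BR_add_N hm hN0]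
  have hrefl := sum_reflect N (fun x => (BR m N x)^2) hper
  have trig : ∀ y : ℤ, (sR N ((m:ℤ)+y))^2 + (sR N ((m:ℤ)-y))^2 = 1 := by
    intro y
    rw [sR, sR]
    have hm0 : (m:ℝ) ≠ 0 := Nat.cast_ne_zero.2 (by omega)
    have harg : Real.pi * (((m:ℤ) - y : ℤ) : ℝ) / N
        = Real.pi/2 - Real.pi * (((m:ℤ) + y : ℤ) : ℝ) / N := by
      rw [hN]; push_cast; field_simp; ring
    rw [harg, Real.sin_pi_div_two_sub]
    exact Real.sin_sq_add_cos_sq _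
  have hBneg : ∀ y : ℤ, BR m N (-y) = sR N ((m:ℤ)-y) * PR m N y := by
    intro y
    rw [BR, PR_even hm hN, show (m:ℤ) + -y = (m:ℤ) - y by ring]
  have key : ∀ y : ℤ, (BR m N y)^2 + (BR m N (-y))^2 = (PR m N y)^2 := by
    intro y
    rw [BR, hBneg]
    have := trig y
    nlinarith [this]
  calc 2 * ∑ y ∈ Finset.range N, (BR m N y)^2
      = (∑ y ∈ Finset.range N, (BR m N y)^2) + ∑ y ∈ Finset.range N, (BR m N (-(y:ℤ)))^2 := by
        rw [hrefl]; ring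
    _ = ∑ y ∈ Finset.range N, ((BR m N y)^2 + (BR m N (-(y:ℤ)))^2) := by
        rw [Finset.sum_add_distrib]
    _ = ∑ y ∈ Finset.range N, (PR m N y)^2 :=
        Finset.sum_congr rfl (fun y _ => key y)

noncomputable def cR (N : ℕ) (t : ℤ) : ℝ := Real.cos (Real.pi * t / N)

noncomputable def fRe (m N : ℕ) (x : ℤ) : ℝ := cR N x * PR m N x

noncomputable def gIm (m N : ℕ) (x : ℤ) : ℝ := sR N x * PR m N x

lemma hC_split (x : ℤ) : hC m N x = ((fRe m N x : ℝ) : ℂ) + Complex.I * ((gIm m N x : ℝ) : ℂ) := by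
  rw [hC, E, fRe, gIm, cR, sR]
  have h : (Real.pi:ℂ) * Complex.I * (x:ℂ) / N = ((Real.pi * x / N : ℝ):ℂ) * Complex.I := by
    push_cast; ring
  rw [h, Complex.exp_mul_I, ← Complex.ofReal_cos, ← Complex.ofReal_sin]
  push_cast
  ring

lemma sR_odd (t : ℤ) : sR N (-t) = - sR N t := by
  rw [sR, sR, show (((-t : ℤ)):ℝ) = -(t:ℝ) by push_cast; ring]
  rw [show Real.pi * -(t:ℝ) / N = -(Real.pi * t / N) by ring, Real.sin_neg]

lemma AH_zero : AH m N 0 = ∑ j ∈ Finset.range N, hC m N j := by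
  rw [AH]
  apply Finset.sum_congr rfl
  intro j _
  rw [show (-2*(j:ℤ)*(0:ℤ)) = 0 by ring, E_zero, one_mul]

lemma sum_g (hm : 1 ≤ m) (hN : N = 4 * m) : ∑ j ∈ Finset.range N, gIm m N (j:ℤ) = 0 := by
  have hN0 : N ≠ 0 := by omega
  have hper : ∀ x : ℤ, gIm m N (x + N) = gIm m N x := by
    intro x
    rw [gIm, gIm, sR_add_N hN0, PR_add_N hm hN0]
    ring
  have hrefl := sum_reflect N (gIm m N) hper
  have hodd : ∀ x : ℤ, gIm m N (-x) = - gIm m N x := by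
    intro x
    rw [gIm, gIm, sR_odd, PR_even hm hN]
    ring
  have : ∑ j ∈ Finset.range N, gIm m N (-(j:ℤ)) = - ∑ j ∈ Finset.range N, gIm m N (j:ℤ) := by
    rw [← Finset.sum_neg_distrib]
    exact Finset.sum_congr rfl (fun j _ => hodd j)
  rw [this] at hrefl
  linarith

lemma PR_neg_top (hm : 1 ≤ m) (hN : N = 4 * m) {x : ℤ} (h1 : 3*(m:ℤ) ≤ x) (h2 : x < N) :
    PR m N x < 0 := by
  have hN0 : N ≠ 0 := by omega
  have hneg : ∀ k ∈ Finset.range (2*m-1), sR N ((m:ℤ)+k+1-x) < 0 := by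
    intro k hk
    have hk' : k < 2*m-1 := Finset.mem_range.1 hk
    have := sR_pos hN0 (t := -((m:ℤ)+k+1-x)) (by omega) (by omega)
    have h := sR_odd (N := N) ((m:ℤ)+k+1-x)
    rw [h] at this
    linarith
  rw [PR]
  have hsplit : ∏ k ∈ Finset.range (2*m-1), sR N ((m:ℤ)+k+1-x)
      = (-1)^(2*m-1) * ∏ k ∈ Finset.range (2*m-1), (- sR N ((m:ℤ)+k+1-x)) := by
    calc ∏ k ∈ Finset.range (2*m-1), sR N ((m:ℤ)+k+1-x)
        = ∏ k ∈ Finset.range (2*m-1), ((-1) * (- sR N ((m:ℤ)+k+1-x))) := by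
          apply Finset.prod_congr rfl; intro k _; ring
      _ = (∏ _k ∈ Finset.range (2*m-1), (-1:ℝ)) * ∏ k ∈ Finset.range (2*m-1), (- sR N ((m:ℤ)+k+1-x)) :=
          Finset.prod_mul_distrib
      _ = (-1)^(2*m-1) * ∏ k ∈ Finset.range (2*m-1), (- sR N ((m:ℤ)+k+1-x)) := by
          rw [Finset.prod_const, Finset.card_range]
  rw [hsplit, Odd.neg_one_pow ⟨m-1, by omega⟩]
  have hpos : 0 < ∏ k ∈ Finset.range (2*m-1), (- sR N ((m:ℤ)+k+1-x)) :=
    Finset.prod_pos (fun k hk => by linarith [hneg k hk])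
  nlinarith

lemma fRe_nonneg (hm : 1 ≤ m) (hN : N = 4 * m) {x : ℤ} (h0 : 0 ≤ x) (h1 : x < N) :
    0 ≤ fRe m N x := by
  have hN0 : N ≠ 0 := by omega
  have hNR : (0:ℝ) < N := by exact_mod_cast Nat.pos_of_ne_zero hN0
  rcases le_or_gt x m with hx | hx
  · apply mul_nonneg
    · apply Real.cos_nonneg_of_mem_Icc
      constructor
      · have : (0:ℝ) ≤ (x:ℝ) := by exact_mod_cast h0
        have : 0 ≤ Real.pi * x / N := by positivity
        linarith [Real.pi_pos]
      · rw [div_le_iff₀ hNR]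
        have hxr : (x:ℝ) ≤ m := by exact_mod_cast hx
        have hNr : (4*(m:ℝ)) = N := by rw [hN]; push_cast; ring
        nlinarith [Real.pi_pos]
    · exact le_of_lt (PR_pos hm hN h0 hx)
  rcases le_or_gt x (3*(m:ℤ)-1) with hx2 | hx2
  · rw [fRe, PR_zero_mid hm (by omega) hx2, mul_zero]
  · have hcos : cR N x ≤ 0 := by
      apply Real.cos_nonpos_of_pi_div_two_le_of_le
      · rw [le_div_iff₀ hNR]
        have hxr : (3*(m:ℝ)) ≤ x := by exact_mod_cast (by omega : 3*(m:ℤ) ≤ x)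
        have hNr : ((N:ℝ)) = 4*(m:ℝ) := by rw [hN]; push_cast; ring
        nlinarith [Real.pi_pos]
      · have hxr : (x:ℝ) ≤ N := by exact_mod_cast le_of_lt h1
        rw [div_le_iff₀ hNR]
        nlinarith [Real.pi_pos]
    have hPR : PR m N x < 0 := PR_neg_top hm hN (by omega) h1
    rw [fRe]
    nlinarith

lemma sum_f_pos (hm : 1 ≤ m) (hN : N = 4 * m) : 0 < ∑ j ∈ Finset.range N, fRe m N (j:ℤ) := by
  have hN0 : N ≠ 0 := by omega
  apply Finset.sum_pos'
  · intro j hj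
    exact fRe_nonneg hm hN (by positivity) (by exact_mod_cast Finset.mem_range.1 hj)
  · refine ⟨0, Finset.mem_range.2 (by omega), ?_⟩
    rw [show ((0:ℕ):ℤ) = 0 by norm_num, fRe, cR]
    simp only [Int.cast_zero, mul_zero, zero_div, Real.cos_zero, one_mul]
    exact PR_pos hm hN le_rfl (by omega)

lemma AH_zero_eq (hm : 1 ≤ m) (hN : N = 4 * m) :
    AH m N 0 = ((∑ j ∈ Finset.range N, fRe m N (j:ℤ) : ℝ) : ℂ) := by
  rw [AH_zero]
  calc ∑ j ∈ Finset.range N, hC m N (j:ℤ)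
      = ∑ j ∈ Finset.range N, (((fRe m N (j:ℤ) : ℝ):ℂ) + Complex.I * ((gIm m N (j:ℤ) : ℝ):ℂ)) :=
        Finset.sum_congr rfl (fun j _ => hC_split j)
    _ = (∑ j ∈ Finset.range N, ((fRe m N (j:ℤ) : ℝ):ℂ))
        + Complex.I * ∑ j ∈ Finset.range N, ((gIm m N (j:ℤ) : ℝ):ℂ) := by
        rw [Finset.sum_add_distrib, Finset.mul_sum]
    _ = ((∑ j ∈ Finset.range N, fRe m N (j:ℤ) : ℝ) : ℂ) := by
        norm_cast
        rw [sum_g hm hN]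
        simp

lemma AH_sqrt (hm : 1 ≤ m) (hN : N = 4 * m) (y : ℤ) :
    AH m N y = ((Real.sqrt (2*N) : ℝ) : ℂ) * ((BR m N y : ℝ) : ℂ) := by
  have hN0 : N ≠ 0 := by omega
  have hB0 : 0 < BR m N 0 := BR0_pos hm hN
  set S := ∑ j ∈ Finset.range N, fRe m N (j:ℤ) with hS
  set r : ℝ := S / BR m N 0 with hr
  have hrpos : 0 < r := div_pos (sum_f_pos hm hN) hB0
  have hμr : AH m N 0 / ((BR m N 0 : ℝ):ℂ) = ((r:ℝ):ℂ) := by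
    rw [AH_zero_eq hm hN, hr, Complex.ofReal_div]
  -- Parseval computation
  set T := ∑ j ∈ Finset.range N, (PR m N (j:ℤ))^2 with hT
  set U := ∑ j ∈ Finset.range N, (BR m N (j:ℤ))^2 with hU
  have hTpos : 0 < T := by
    apply Finset.sum_pos'
    · intro j _; positivity
    · exact ⟨0, Finset.mem_range.2 (by omega),
        by simpa using pow_pos (PR_pos hm hN le_rfl (by omega)) 2⟩
  have h2U : 2 * U = T := sum_B_sq hm hN
  have hUpos : 0 < U := by linarith
  have hL : ∑ y ∈ Finset.range N, AH m N y * (starRingEnd ℂ) (AH m N y)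
      = ((r:ℝ):ℂ) * ((r:ℝ):ℂ) * ((U : ℝ):ℂ) := by
    have hterm : ∀ j : ℕ, AH m N (j:ℤ) * (starRingEnd ℂ) (AH m N (j:ℤ))
        = ((r:ℝ):ℂ) * ((r:ℝ):ℂ) * (((BR m N (j:ℤ))^2 : ℝ):ℂ) := by
      intro j
      rw [AH_eq_all hm hN (j:ℤ), hμr, map_mul, Complex.conj_ofReal, Complex.conj_ofReal]
      push_cast
      ring
    rw [Finset.sum_congr rfl (fun j _ => hterm j), ← Finset.mul_sum, hU]
    congr 1
    push_cast
    rfl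
  have hP := parseval hm hN
  rw [hL] at hP
  have hRHS : (N:ℂ) * ∑ j ∈ Finset.range N, (((PR m N (j:ℤ))^2 : ℝ) : ℂ) = ((((N:ℝ) * T) : ℝ):ℂ) := by
    push_cast
    rw [hT]
    push_cast
    ring
  rw [hRHS] at hP
  have hreal : r * r * U = (N:ℝ) * T := by
    have : ((r * r * U : ℝ):ℂ) = (((N:ℝ) * T : ℝ):ℂ) := by
      push_cast
      push_cast at hP
      linear_combination hP
    exact_mod_cast this
  have hrr : r * r = 2 * (N:ℝ) := by
    have hTU : T = 2 * U := h2U.symm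
    rw [hTU] at hreal
    have := mul_right_cancel₀ (ne_of_gt hUpos) (by linarith : (r*r) * U = (2*(N:ℝ)) * U)
    exact this
  have hrsqrt : r = Real.sqrt (2*(N:ℝ)) := by
    rw [← hrr, Real.sqrt_mul_self (le_of_lt hrpos)]
  have := AH_eq_all hm hN y
  rw [hμr, hrsqrt] at this
  exact this

lemma trig_add (hm : 1 ≤ m) (hN : N = 4 * m) (y : ℤ) :
    sR N ((m:ℤ)+y) + sR N ((m:ℤ)-y) = Real.sqrt 2 * cR N y := by
  have hm0 : (m:ℝ) ≠ 0 := Nat.cast_ne_zero.2 (by omega)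
  have h1 : Real.pi * ((((m:ℤ)+y : ℤ)):ℝ) / N = Real.pi/4 + Real.pi * (y:ℝ)/N := by
    rw [hN]; push_cast; field_simp
  have h2 : Real.pi * ((((m:ℤ)-y : ℤ)):ℝ) / N = Real.pi/4 - Real.pi * (y:ℝ)/N := by
    rw [hN]; push_cast; field_simp
  rw [sR, sR, cR, h1, h2, Real.sin_add, Real.sin_sub, Real.sin_pi_div_four, Real.cos_pi_div_four]
  ring

lemma trig_sub (hm : 1 ≤ m) (hN : N = 4 * m) (y : ℤ) :
    sR N ((m:ℤ)+y) - sR N ((m:ℤ)-y) = Real.sqrt 2 * sR N y := by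
  have hm0 : (m:ℝ) ≠ 0 := Nat.cast_ne_zero.2 (by omega)
  have h1 : Real.pi * ((((m:ℤ)+y : ℤ)):ℝ) / N = Real.pi/4 + Real.pi * (y:ℝ)/N := by
    rw [hN]; push_cast; field_simp
  have h2 : Real.pi * ((((m:ℤ)-y : ℤ)):ℝ) / N = Real.pi/4 - Real.pi * (y:ℝ)/N := by
    rw [hN]; push_cast; field_simp
  rw [sR, sR, sR, h1, h2, Real.sin_add, Real.sin_sub, Real.sin_pi_div_four, Real.cos_pi_div_four]
  ring

lemma hC_conj (j : ℤ) : (starRingEnd ℂ) (hC m N j)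
    = ((fRe m N j : ℝ):ℂ) - Complex.I * ((gIm m N j : ℝ):ℂ) := by
  rw [hC_split, map_add, map_mul, Complex.conj_ofReal, Complex.conj_ofReal, Complex.conj_I]
  ring

lemma main1 (hm : 1 ≤ m) (hN : N = 4 * m) (y : ℤ) :
    ∑ j ∈ Finset.range N, E N (-2*(j:ℤ)*y) * ((fRe m N (j:ℤ) : ℝ):ℂ)
      = ((Real.sqrt N : ℝ):ℂ) * ((fRe m N y : ℝ):ℂ) := by
  have hN0 : N ≠ 0 := by omega
  have hconjAH : (starRingEnd ℂ) (AH m N (-y))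
      = ∑ j ∈ Finset.range N, E N (-2*(j:ℤ)*y) * (starRingEnd ℂ) (hC m N (j:ℤ)) := by
    rw [AH, map_sum]
    apply Finset.sum_congr rfl
    intro j _
    rw [map_mul, conj_E, show -(-2*(j:ℤ)*(-y)) = -2*(j:ℤ)*y by ring]
  have hsum : ∑ j ∈ Finset.range N, E N (-2*(j:ℤ)*y) * ((fRe m N (j:ℤ) : ℝ):ℂ)
      = (AH m N y + (starRingEnd ℂ) (AH m N (-y))) / 2 := by
    rw [AH, hconjAH, ← Finset.sum_add_distrib, Finset.sum_div]
    apply Finset.sum_congr rfl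
    intro j _
    rw [hC_conj, hC_split (m := m) (N := N) (j:ℤ)]
    ring
  rw [hsum, AH_sqrt hm hN y, AH_sqrt hm hN (-y), map_mul, Complex.conj_ofReal,
    Complex.conj_ofReal]
  have hBneg : BR m N (-y) = sR N ((m:ℤ)-y) * PR m N y := by
    rw [BR, PR_even hm hN, show (m:ℤ) + -y = (m:ℤ) - y by ring]
  have htrig := trig_add hm hN y
  have h22 : Real.sqrt 2 * Real.sqrt 2 = 2 := Real.mul_self_sqrt (by norm_num)
  have h2 : Real.sqrt (2*(N:ℝ)) = Real.sqrt 2 * Real.sqrt N := Real.sqrt_mul (by norm_num) N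
  have hreal : Real.sqrt (2*(N:ℝ)) * (BR m N y + BR m N (-y)) / 2
      = Real.sqrt N * fRe m N y := by
    rw [BR, hBneg, fRe, h2]
    linear_combination (Real.sqrt 2 * Real.sqrt N * PR m N y / 2) * htrig
      + (Real.sqrt N * cR N y * PR m N y / 2) * h22
  calc (((Real.sqrt (2*(N:ℝ)) : ℝ):ℂ) * ((BR m N y : ℝ):ℂ)
        + ((Real.sqrt (2*(N:ℝ)) : ℝ):ℂ) * ((BR m N (-y) : ℝ):ℂ)) / 2
      = (((Real.sqrt (2*(N:ℝ)) * (BR m N y + BR m N (-y)) / 2 : ℝ)):ℂ) := by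
        push_cast; ring
    _ = (((Real.sqrt N * fRe m N y : ℝ)):ℂ) := by rw [hreal]
    _ = ((Real.sqrt N : ℝ):ℂ) * ((fRe m N y : ℝ):ℂ) := by push_cast; ring

lemma main2 (hm : 1 ≤ m) (hN : N = 4 * m) (y : ℤ) :
    ∑ j ∈ Finset.range N, E N (-2*(j:ℤ)*y) * ((gIm m N (j:ℤ) : ℝ):ℂ)
      = (-Complex.I * ((Real.sqrt N : ℝ):ℂ)) * ((gIm m N y : ℝ):ℂ) := by
  have hN0 : N ≠ 0 := by omega
  have h2I : (2*Complex.I : ℂ) ≠ 0 := by simp [Complex.I_ne_zero]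
  have hconjAH : (starRingEnd ℂ) (AH m N (-y))
      = ∑ j ∈ Finset.range N, E N (-2*(j:ℤ)*y) * (starRingEnd ℂ) (hC m N (j:ℤ)) := by
    rw [AH, map_sum]
    apply Finset.sum_congr rfl
    intro j _
    rw [map_mul, conj_E, show -(-2*(j:ℤ)*(-y)) = -2*(j:ℤ)*y by ring]
  have hsum : ∑ j ∈ Finset.range N, E N (-2*(j:ℤ)*y) * ((gIm m N (j:ℤ) : ℝ):ℂ)
      = (AH m N y - (starRingEnd ℂ) (AH m N (-y))) / (2*Complex.I) := by
    rw [AH, hconjAH, ← Finset.sum_sub_distrib, Finset.sum_div]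
    apply Finset.sum_congr rfl
    intro j _
    rw [eq_div_iff h2I, hC_conj, hC_split (m := m) (N := N) (j:ℤ)]
    ring
  rw [hsum, AH_sqrt hm hN y, AH_sqrt hm hN (-y), map_mul, Complex.conj_ofReal,
    Complex.conj_ofReal]
  have hBneg : BR m N (-y) = sR N ((m:ℤ)-y) * PR m N y := by
    rw [BR, PR_even hm hN, show (m:ℤ) + -y = (m:ℤ) - y by ring]
  have htrig := trig_sub hm hN y
  have h22 : Real.sqrt 2 * Real.sqrt 2 = 2 := Real.mul_self_sqrt (by norm_num)
  have h2 : Real.sqrt (2*(N:ℝ)) = Real.sqrt 2 * Real.sqrt N := Real.sqrt_mul (by norm_num) N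
  have hreal2 : Real.sqrt (2*(N:ℝ)) * (BR m N y - BR m N (-y))
      = 2 * Real.sqrt N * gIm m N y := by
    rw [BR, hBneg, gIm, h2]
    linear_combination (Real.sqrt 2 * Real.sqrt N * PR m N y) * htrig
      + (Real.sqrt N * sR N y * PR m N y) * h22
  rw [div_eq_iff h2I]
  have hc := congrArg (fun r : ℝ => (r : ℂ)) hreal2
  push_cast at hc
  linear_combination hc + (2*((Real.sqrt N : ℝ):ℂ)*((gIm m N y : ℝ):ℂ))*Complex.I_sq

lemma fRe_eval (n : ℕ) : fRe m N (n:ℤ)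
    = Real.cos (Real.pi * (n : ℝ) / N) *
        ∏ k ∈ Finset.range (2 * m - 1),
          Real.sin (Real.pi * ((m : ℝ) + ((k:ℝ) + 1) - (n : ℝ)) / N) := by
  rw [fRe, cR, PR]
  have h1 : Real.cos (Real.pi * (((n:ℤ)):ℝ) / N) = Real.cos (Real.pi * (n:ℝ)/N) := by
    norm_num
  rw [h1]
  congr 1
  apply Finset.prod_congr rfl
  intro k _
  rw [sR]
  have h2 : Real.pi * (((((m:ℤ)+(k:ℤ)+1-(n:ℤ)) : ℤ)):ℝ) / N
      = Real.pi * ((m:ℝ) + ((k:ℝ)+1) - (n:ℝ)) / N := by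
    push_cast; ring
  rw [h2]

lemma gIm_eval (n : ℕ) : gIm m N (n:ℤ)
    = Real.sin (Real.pi * (n : ℝ) / N) *
        ∏ k ∈ Finset.range (2 * m - 1),
          Real.sin (Real.pi * ((m : ℝ) + ((k:ℝ) + 1) - (n : ℝ)) / N) := by
  rw [gIm, sR, PR]
  have h1 : Real.sin (Real.pi * (((n:ℤ)):ℝ) / N) = Real.sin (Real.pi * (n:ℝ)/N) := by
    norm_num
  rw [h1]
  congr 1
  apply Finset.prod_congr rfl
  intro k _
  rw [sR]
  have h2 : Real.pi * (((((m:ℤ)+(k:ℤ)+1-(n:ℤ)) : ℤ)):ℝ) / N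
      = Real.pi * ((m:ℝ) + ((k:ℝ)+1) - (n:ℝ)) / N := by
    push_cast; ring
  rw [h2]

lemma bridge_f (n : ℕ) :
    ((Real.cos (Real.pi * (n : ℝ) / N) : ℝ) : ℂ) *
        ∏ k ∈ Finset.range (2 * m - 1),
          ((Real.sin (Real.pi * ((m : ℝ) + ((k:ℝ) + 1) - (n : ℝ)) / N) : ℝ) : ℂ)
      = ((fRe m N (n:ℤ) : ℝ) : ℂ) := by
  rw [fRe_eval]
  push_cast
  ring

lemma bridge_g (n : ℕ) :
    ((Real.sin (Real.pi * (n : ℝ) / N) : ℝ) : ℂ) *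
        ∏ k ∈ Finset.range (2 * m - 1),
          ((Real.sin (Real.pi * ((m : ℝ) + ((k:ℝ) + 1) - (n : ℝ)) / N) : ℝ) : ℂ)
      = ((gIm m N (n:ℤ) : ℝ) : ℂ) := by
  rw [gIm_eval]
  push_cast
  ring

end S14

/-- The (non-normalized) discrete Fourier transform on `ZMod N`:
`(dft N f) k = ∑_{j=0}^{N-1} exp(-2πi j k / N) f(j)`. -/
noncomputable def dft (N : ℕ) (f : ZMod N → ℂ) : ZMod N → ℂ := fun k =>
  ∑ j ∈ Finset.range N,
    Complex.exp (-(2 * Real.pi * Complex.I * (j : ℂ) * (k.val : ℂ)) / (N : ℂ)) * f (j : ZMod N)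

/-- The discrete interval `[-a, a]`, viewed as a subset of `ZMod N`. -/
def dInterval (N : ℕ) (a : ℤ) : Set (ZMod N) := {x | ∃ j : ℤ, |j| ≤ a ∧ (j : ZMod N) = x}

theorem statement14 (m : ℕ) (hm : 1 ≤ m) (N : ℕ) (hN : N = 4 * m) :
    dft N (fun x : ZMod N =>
        ((Real.cos (Real.pi * (x.val : ℝ) / N) : ℝ) : ℂ) *
          ∏ k ∈ Finset.range (2 * m - 1),
            ((Real.sin (Real.pi * ((m : ℝ) + (k + 1) - (x.val : ℝ)) / N) : ℝ) : ℂ))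
      = (Real.sqrt N : ℂ) • (fun x : ZMod N =>
        ((Real.cos (Real.pi * (x.val : ℝ) / N) : ℝ) : ℂ) *
          ∏ k ∈ Finset.range (2 * m - 1),
            ((Real.sin (Real.pi * ((m : ℝ) + (k + 1) - (x.val : ℝ)) / N) : ℝ) : ℂ)) ∧
    dft N (fun x : ZMod N =>
        ((Real.sin (Real.pi * (x.val : ℝ) / N) : ℝ) : ℂ) *
          ∏ k ∈ Finset.range (2 * m - 1),
            ((Real.sin (Real.pi * ((m : ℝ) + (k + 1) - (x.val : ℝ)) / N) : ℝ) : ℂ))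
      = (-Complex.I * (Real.sqrt N : ℂ)) • (fun x : ZMod N =>
        ((Real.sin (Real.pi * (x.val : ℝ) / N) : ℝ) : ℂ) *
          ∏ k ∈ Finset.range (2 * m - 1),
            ((Real.sin (Real.pi * ((m : ℝ) + (k + 1) - (x.val : ℝ)) / N) : ℝ) : ℂ)) := by
  have hN0 : N ≠ 0 := by omega
  constructor
  · funext z
    have hterm : ∀ j ∈ Finset.range N,
        Complex.exp (-(2 * Real.pi * Complex.I * (j : ℂ) * (z.val : ℂ)) / (N : ℂ)) *
          ((fun x : ZMod N =>
            ((Real.cos (Real.pi * (x.val : ℝ) / N) : ℝ) : ℂ) *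
              ∏ k ∈ Finset.range (2 * m - 1),
                ((Real.sin (Real.pi * ((m : ℝ) + (k + 1) - (x.val : ℝ)) / N) : ℝ) : ℂ)) ((j:ℕ) : ZMod N))
        = S14.E N (-2*(j:ℤ)*((z.val:ℕ):ℤ)) * ((S14.fRe m N ((j:ℕ):ℤ) : ℝ) : ℂ) := by
      intro j hj
      simp only []
      congr 1
      · rw [S14.E]
        congr 1
        push_cast
        ring
      · rw [ZMod.val_natCast_of_lt (Finset.mem_range.1 hj)]
        exact S14.bridge_f j
    calc dft N _ z
        = ∑ j ∈ Finset.range N, S14.E N (-2*(j:ℤ)*((z.val:ℕ):ℤ)) * ((S14.fRe m N ((j:ℕ):ℤ) : ℝ) : ℂ) := by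
          rw [dft]
          exact Finset.sum_congr rfl hterm
      _ = ((Real.sqrt N : ℝ):ℂ) * ((S14.fRe m N ((z.val:ℕ):ℤ) : ℝ) : ℂ) := S14.main1 hm hN _
      _ = _ := by
          rw [Pi.smul_apply, smul_eq_mul, S14.bridge_f (m := m) (N := N) z.val]
  · funext z
    have hterm : ∀ j ∈ Finset.range N,
        Complex.exp (-(2 * Real.pi * Complex.I * (j : ℂ) * (z.val : ℂ)) / (N : ℂ)) *
          ((fun x : ZMod N =>
            ((Real.sin (Real.pi * (x.val : ℝ) / N) : ℝ) : ℂ) *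
              ∏ k ∈ Finset.range (2 * m - 1),
                ((Real.sin (Real.pi * ((m : ℝ) + (k + 1) - (x.val : ℝ)) / N) : ℝ) : ℂ)) ((j:ℕ) : ZMod N))
        = S14.E N (-2*(j:ℤ)*((z.val:ℕ):ℤ)) * ((S14.gIm m N ((j:ℕ):ℤ) : ℝ) : ℂ) := by
      intro j hj
      simp only []
      congr 1
      · rw [S14.E]
        congr 1
        push_cast
        ring
      · rw [ZMod.val_natCast_of_lt (Finset.mem_range.1 hj)]
        exact S14.bridge_g j
    calc dft N _ z
        = ∑ j ∈ Finset.range N, S14.E N (-2*(j:ℤ)*((z.val:ℕ):ℤ)) * ((S14.gIm m N ((j:ℕ):ℤ) : ℝ) : ℂ) := by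
          rw [dft]
          exact Finset.sum_congr rfl hterm
      _ = (-Complex.I * ((Real.sqrt N : ℝ):ℂ)) * ((S14.gIm m N ((z.val:ℕ):ℤ) : ℝ) : ℂ) :=
          S14.main2 hm hN _
      _ = _ := by
          rw [Pi.smul_apply, smul_eq_mul, S14.bridge_g (m := m) (N := N) z.val]
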